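/- In a maximally-branching rooted join tree, if v_a is a non-root node and v_d is a descendant of v_a, and x_a, x_d are vertices contained in nodes v_a and v_d respectively, then there is a path in the hypergraph from x_a to x_d such that no intermediate vertex of the path appears in any strict ancestor of v_a. -/

import Mathlib

/-- The underlying tree graph of a parent function. -/
def treeGraph {ι : Type*} (parent : ι → ι) : SimpleGraph ι :=
  SimpleGraph.fromRel (fun i j => parent i = j)

/-- Join-tree property: for every vertex `u`, the nodes containing `u` form a
connected subtree. -/
def joinTreeProp {V ι : Type*} (N : ι → Set V) (parent : ι → ι) : Prop :=
  ∀ u : V, ((treeGraph parent).induce {i | u ∈ N i}).Preconnected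

/-- `a` is a strict ancestor of `p`. -/
def strictAncestor {ι : Type*} (parent : ι → ι) (p a : ι) : Prop :=
  ∃ n, 1 ≤ n ∧ parent^[n] p = a

/-- Maximally branching rooted join tree. -/
def maxBranching {V ι : Type*} [DecidableEq ι] (N : ι → Set V) (r : ι)
    (parent : ι → ι) : Prop :=
  ∀ c a, c ≠ r → strictAncestor parent (parent c) a → a ≠ parent c →
    ¬ joinTreeProp N (Function.update parent c a)

section AuxLemmas

variable {V ι : Type*}

private lemma iterRoot (parent : ι → ι) (r : ι) (hroot : parent r = r) (n : ℕ) :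
    parent^[n] r = r := Function.iterate_fixed hroot n

private lemma cycleRoot (parent : ι → ι) (r : ι) (hroot : parent r = r)
    (hreach : ∀ i, ∃ n, parent^[n] i = r) {i : ι} {k : ℕ} (hk : 1 ≤ k)
    (hcyc : parent^[k] i = i) : i = r := by
  obtain ⟨m, hm⟩ := hreach i
  have hmul : ∀ t : ℕ, parent^[k * t] i = i := by
    intro t
    induction t with
    | zero => simp
    | succ t ih =>
      have h : k * (t + 1) = k * t + k := by ring
      rw [h, Function.iterate_add_apply, hcyc]
      exact ih
  have hge : m ≤ k * m := by
    calc m = 1 * m := (one_mul m).symm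
    _ ≤ k * m := Nat.mul_le_mul_right m hk
  have hr : parent^[k * m] i = r := by
    have h2 : k * m = (k * m - m) + m := (Nat.sub_add_cancel hge).symm
    rw [h2, Function.iterate_add_apply, hm, iterRoot parent r hroot]
  rw [← hmul m, hr]

private lemma walk_through (parent : ι → ι) (p : ι) (S : Set ι) :
    ∀ {x y : S} (_w : ((treeGraph parent).induce S).Walk x y),
      (∃ k, parent^[k] (x : ι) = p) → (¬ ∃ k, parent^[k] (y : ι) = p) → p ∈ S := by
  intro x y w
  induction w with
  | nil => intro h1 h2; exact absurd h1 h2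
  | @cons x z y h w ih =>
    intro h1 h2
    by_cases hx : (x : ι) = p
    · exact hx ▸ x.2
    · apply ih ?_ h2
      have h' : (treeGraph parent).Adj (x : ι) (z : ι) := h
      rw [treeGraph, SimpleGraph.fromRel_adj] at h'
      obtain ⟨k, hk⟩ := h1
      rcases h'.2 with hxz | hzx
      · cases k with
        | zero => exact absurd hk hx
        | succ k' =>
          exact ⟨k', by rw [← hxz, ← Function.iterate_succ_apply]; exact hk⟩
      · exact ⟨k + 1, by rw [Function.iterate_succ_apply, hzx, hk]⟩

private lemma mem_chain (N : ι → Set V) (parent : ι → ι) (r : ι)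
    (hroot : parent r = r) (hreach : ∀ i, ∃ n, parent^[n] i = r)
    (hjt : joinTreeProp N parent) (u : V) (c : ι) (m : ℕ)
    (hc : u ∈ N c) (hm : u ∈ N (parent^[m] c)) :
    ∀ j ≤ m, u ∈ N (parent^[j] c) := by
  intro j hj
  by_cases hbel : ∃ k, parent^[k] (parent^[m] c) = parent^[j] c
  · obtain ⟨k, hk⟩ := hbel
    have h1 : parent^[m] c = parent^[m - j] (parent^[j] c) := by
      rw [← Function.iterate_add_apply, Nat.sub_add_cancel hj]
    have h2 : parent^[k + (m - j)] (parent^[j] c) = parent^[j] c := by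
      rw [Function.iterate_add_apply, ← h1, hk]
    rcases Nat.eq_zero_or_pos (k + (m - j)) with h0 | hpos
    · have hk0 : k = 0 := by omega
      rw [hk0] at hk
      simp only [Function.iterate_zero, id] at hk
      rwa [hk] at hm
    · have hr : parent^[j] c = r := cycleRoot parent r hroot hreach hpos h2
      have heq : parent^[m] c = parent^[j] c := by
        rw [h1, hr, iterRoot parent r hroot]
      rwa [heq] at hm
  · obtain ⟨w⟩ := hjt u ⟨c, hc⟩ ⟨parent^[m] c, hm⟩
    exact walk_through parent (parent^[j] c) {i | u ∈ N i} w ⟨j, rfl⟩ hbel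

private lemma reachable_transfer {α : Type*} {G H : SimpleGraph α}
    (h : ∀ a b, G.Adj a b → H.Reachable a b) (hG : G.Preconnected) :
    H.Preconnected := by
  intro x y
  obtain ⟨w⟩ := hG x y
  induction w with
  | nil => exact SimpleGraph.Reachable.refl _
  | cons ha _ ih => exact (h _ _ ha).trans ih

private lemma key_lemma [DecidableEq ι] (N : ι → Set V) (r : ι) (parent : ι → ι)
    (hroot : parent r = r) (hreach : ∀ i, ∃ n, parent^[n] i = r)
    (hjt : joinTreeProp N parent) (hmb : maxBranching N r parent)
    (va : ι) (hva : va ≠ r) (c : ι) (k : ℕ) (hk : 1 ≤ k) (hck : parent^[k] c = va) :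
    ∃ u, u ∈ N c ∧ u ∈ N (parent c) ∧ ∀ a, strictAncestor parent va a → u ∉ N a := by
  obtain ⟨k', rfl⟩ : ∃ k', k = k' + 1 := ⟨k - 1, by omega⟩
  by_contra hcon
  push_neg at hcon
  have hcr : c ≠ r := by
    intro h; apply hva; rw [← hck, h, iterRoot parent r hroot]
  have hanc : strictAncestor parent (parent c) (parent va) := by
    refine ⟨k' + 1, by omega, ?_⟩
    rw [← Function.iterate_succ_apply, Function.iterate_succ_apply', hck]
  have hne : parent va ≠ parent c := by
    intro h
    apply hva
    apply cycleRoot parent r hroot hreach (k := k' + 1) (by omega)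
    calc parent^[k' + 1] va = parent^[k'] (parent va) := Function.iterate_succ_apply _ _ _
      _ = parent^[k'] (parent c) := by rw [h]
      _ = parent^[k' + 1] c := (Function.iterate_succ_apply _ _ _).symm
      _ = va := hck
  apply hmb c (parent va) hcr hanc hne
  intro u
  set P := Function.update parent c (parent va) with hP
  apply reachable_transfer ?_ (hjt u)
  have adj_new : ∀ (i j : ι) (hi : u ∈ N i) (hj : u ∈ N j), i ≠ j → P i = j →
      ((treeGraph P).induce {i | u ∈ N i}).Adj ⟨i, hi⟩ ⟨j, hj⟩ := by
    intro i j hi hj hnij hp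
    show (treeGraph P).Adj i j
    rw [treeGraph, SimpleGraph.fromRel_adj]
    exact ⟨hnij, Or.inl hp⟩
  have step : ∀ (i j : ι) (hi : u ∈ N i) (hj : u ∈ N j), i ≠ j → parent i = j →
      ((treeGraph P).induce {i | u ∈ N i}).Reachable ⟨i, hi⟩ ⟨j, hj⟩ := by
    intro i j hi hj hij hpij
    by_cases hic : i = c
    · subst hic
      subst hpij
      -- i = c, j = parent i, u ∈ N i ∩ N (parent i)
      obtain ⟨a, ⟨s, hs1, hs2⟩, hua⟩ := hcon u hi hj
      have hma : parent^[s + (k' + 1)] i = a := by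
        rw [Function.iterate_add_apply, hck, hs2]
      have chain : ∀ j ≤ s + (k' + 1), u ∈ N (parent^[j] i) :=
        mem_chain N parent r hroot hreach hjt u i (s + (k' + 1)) hi
          (by rw [hma]; exact hua)
      have hmem : ∀ j, j ≤ k' + 2 → u ∈ N (parent^[j] i) := fun j hj2 =>
        chain j (by omega)
      have noc : ∀ j, 1 ≤ j → parent^[j] i ≠ i := by
        intro j hj1 heq
        exact hcr (cycleRoot parent r hroot hreach hj1 heq)
      have reach : ∀ t : ℕ, ∀ ht : t + 1 ≤ k' + 2,
          ((treeGraph P).induce {i | u ∈ N i}).Reachable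
            ⟨parent^[1] i, hmem 1 (by omega)⟩
            ⟨parent^[t + 1] i, hmem (t + 1) (by omega)⟩ := by
        intro t
        induction t with
        | zero => intro _; exact SimpleGraph.Reachable.refl _
        | succ t ih =>
          intro ht
          refine (ih (by omega)).trans (SimpleGraph.Adj.reachable ?_)
          apply adj_new _ _ (hmem (t + 1) (by omega)) (hmem (t + 2) (by omega))
          · intro heq
            have h1 : parent^[1] (parent^[t + 1] i) = parent^[t + 1] i := by
              rw [← Function.iterate_add_apply, Nat.add_comm 1 (t + 1)]
              exact heq.symm
            have hr1 : parent^[t + 1] i = r :=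
              cycleRoot parent r hroot hreach le_rfl h1
            apply hva
            calc va = parent^[k' + 1] i := hck.symm
              _ = parent^[(k' + 1) - (t + 1)] (parent^[t + 1] i) := by
                  rw [← Function.iterate_add_apply, Nat.sub_add_cancel (by omega)]
              _ = r := by rw [hr1, iterRoot parent r hroot]
          · rw [hP, Function.update_of_ne (noc (t + 1) (by omega))]
            exact (Function.iterate_succ_apply' parent (t + 1) i).symm
      have hedge : ((treeGraph P).induce {i | u ∈ N i}).Adj
          ⟨i, hi⟩ ⟨parent^[k' + 2] i, hmem (k' + 2) le_rfl⟩ := by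
        apply adj_new
        · intro heq
          exact hcr (cycleRoot parent r hroot hreach (k := k' + 2) (by omega) heq.symm)
        · rw [hP, Function.update_self]
          rw [show k' + 2 = (k' + 1) + 1 from rfl, Function.iterate_succ_apply', hck]
      have hfin := (hedge.reachable.trans (reach (k' + 1) le_rfl).symm)
      have h1c : parent^[1] i = parent i := Function.iterate_one parent ▸ rfl
      have heq2 : (⟨parent^[1] i, hmem 1 (by omega)⟩ : {i | u ∈ N i}) = ⟨parent i, hj⟩ :=
        Subtype.ext h1c
      rwa [heq2] at hfin
    · exact (adj_new i j hi hj hij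
        (by rw [hP, Function.update_of_ne hic]; exact hpij)).reachable
  rintro ⟨x, hx⟩ ⟨y, hy⟩ hxy
  have h' : (treeGraph parent).Adj x y := hxy
  rw [treeGraph, SimpleGraph.fromRel_adj] at h'
  obtain ⟨hne', hor⟩ := h'
  rcases hor with h1 | h1
  · exact step x y hx hy hne' h1
  · exact (step y x hy hx (Ne.symm hne') h1).symm

end AuxLemmas

/-- In a maximally-branching rooted join tree, for a non-root node `va`,
a descendant `vd` of `va`, and vertices `xa ∈ N va`, `xd ∈ N vd`, there is a path in
the hypergraph from `xa` to `xd` whose intermediate vertices avoid all strict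
ancestors of `va`. -/
theorem maxBranching_descendant_path {V ι : Type*} [Fintype ι] [DecidableEq ι]
    (N : ι → Set V) (r : ι) (parent : ι → ι)
    (hroot : parent r = r) (hreach : ∀ i, ∃ n, parent^[n] i = r)
    (hjt : joinTreeProp N parent) (hmb : maxBranching N r parent)
    (va vd : ι) (hva : va ≠ r) (hdesc : ∃ n, parent^[n] vd = va)
    (xa xd : V) (hxa : xa ∈ N va) (hxd : xd ∈ N vd) :
    ∃ q : List V, q.head? = some xa ∧ q.getLast? = some xd ∧
      List.Chain' (fun u w => ∃ i, u ∈ N i ∧ w ∈ N i) q ∧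
      (∀ n : ℕ, ∀ u : V, 1 ≤ n → n + 1 < q.length → q[n]? = some u →
        ∀ a, strictAncestor parent va a → u ∉ N a) := by
  have main : ∀ (n : ℕ) (vd : ι), parent^[n] vd = va → ∀ xd ∈ N vd,
      ∃ q : List V, q.head? = some xa ∧ q.getLast? = some xd ∧
      List.Chain' (fun u w => ∃ i, u ∈ N i ∧ w ∈ N i) q ∧
      (∀ n : ℕ, ∀ u : V, 1 ≤ n → n + 1 < q.length → q[n]? = some u →
        ∀ a, strictAncestor parent va a → u ∉ N a) := by
    intro n
    induction n with
    | zero =>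
      intro vd hn xd hxd
      simp only [Function.iterate_zero, id] at hn
      subst hn
      refine ⟨[xa, xd], rfl, rfl, ?_, ?_⟩
      · exact List.isChain_cons_cons.mpr ⟨⟨vd, hxa, hxd⟩, List.isChain_singleton xd⟩
      · intro m u h1 h2 _ a _
        simp only [List.length] at h2
        omega
    | succ n ih =>
      intro vd hn xd hxd
      have hn' : parent^[n] (parent vd) = va := by
        rw [← Function.iterate_succ_apply]; exact hn
      obtain ⟨u, hu1, hu2, hu3⟩ := key_lemma N r parent hroot hreach hjt hmb va hva
        vd (n + 1) (by omega) hn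
      obtain ⟨q, hq1, hq2, hq3, hq4⟩ := ih (parent vd) hn' u hu2
      obtain ⟨q', rfl⟩ : ∃ q', q = xa :: q' := by
        cases q with
        | nil => simp at hq1
        | cons a q' =>
          simp only [List.head?_cons, Option.some.injEq] at hq1
          exact ⟨q', by rw [hq1]⟩
      refine ⟨(xa :: q') ++ [xd], rfl, List.getLast?_concat, ?_, ?_⟩
      · refine List.isChain_append.mpr ⟨hq3, List.isChain_singleton xd, ?_⟩
        intro x hx y hy
        rw [hq2] at hx
        simp only [List.head?_cons, Option.mem_def, Option.some.injEq] at hx hy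
        subst hx; subst hy
        exact ⟨vd, hu1, hxd⟩
      · intro m w h1 h2 h3 a ha
        simp only [List.length_append, List.length_cons, List.length_nil] at h2
        have hlt : m < (xa :: q').length := by simp only [List.length_cons]; omega
        rw [List.getElem?_append_left hlt] at h3
        rcases Nat.lt_or_ge (m + 1) (xa :: q').length with hc1 | hc1
        · exact hq4 m w h1 hc1 h3 a ha
        · have hm : m = (xa :: q').length - 1 := by simp at hlt hc1 ⊢; omega
          have : (xa :: q').getLast? = some w := by
            rw [List.getLast?_eq_getElem?, ← hm]
            exact h3
          rw [hq2] at this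
          have hwu : w = u := by
            simpa using this.symm
          subst hwu
          exact hu3 a ha
  obtain ⟨n, hn⟩ := hdesc
  exact main n vd hn xd hxd
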